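/- Every finitely generated subgroup of GL(n, ℂ) is residually finite. -/

import Mathlib

open Matrix

/-- ℤ is a Jacobson ring. -/
instance int_isJacobsonRing : IsJacobsonRing ℤ := by
  rw [isJacobsonRing_iff_prime_eq]
  intro P hP
  by_cases hbot : P = ⊥
  · subst hbot
    refine le_antisymm (fun x hx => ?_) Ideal.le_jacobson
    rw [Ideal.mem_jacobson_bot] at hx
    have h1 := hx 1
    have h2 := hx (-1)
    rw [Int.isUnit_iff] at h1 h2
    simp only [Ideal.mem_bot]
    omega
  · haveI := hP
    haveI hmax : P.IsMaximal := IsPrime.to_maximal_ideal hbot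
    exact Ideal.jacobson_eq_self_of_isMaximal

/-- A field which is module-finite over ℤ is finite. -/
lemma field_finite_of_moduleFinite (K : Type*) [Field K]
    [Module.Finite ℤ K] : Finite K := by
  haveI : Algebra.IsIntegral ℤ K := Algebra.IsIntegral.of_finite ℤ K
  by_cases hinj : Function.Injective (algebraMap ℤ K)
  · exact absurd (isField_of_isIntegral_of_isField hinj (Field.toIsField K)) Int.not_isField
  · rw [Function.not_injective_iff] at hinj
    obtain ⟨a, b, hab, hne⟩ := hinj
    have hm : ((a - b : ℤ) : K) = 0 := by
      push_cast
      rw [show ((a : K) = algebraMap ℤ K a) from by simp,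
        show ((b : K) = algebraMap ℤ K b) from by simp, hab, sub_self]
    have hmne : (a - b : ℤ) ≠ 0 := sub_ne_zero.mpr hne
    have htor : Module.IsTorsion ℤ K := by
      intro x
      refine ⟨⟨a - b, mem_nonZeroDivisors_of_ne_zero hmne⟩, ?_⟩
      show (a - b : ℤ) • x = 0
      rw [zsmul_eq_mul, hm, zero_mul]
    exact Module.finite_of_fg_torsion K htor

/-- Key step: over a Jacobson domain of finite type over ℤ, a nonidentity unit matrix
can be separated in a finite quotient. -/
lemma matrix_units_aux {R : Type} [CommRing R] [IsDomain R] [IsJacobsonRing R]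
    [Algebra.FiniteType ℤ R] {n : ℕ} (M : (Matrix (Fin n) (Fin n) R)ˣ)
    (hM : (M : Matrix (Fin n) (Fin n) R) ≠ 1) :
    ∃ (F : Type) (_ : Group F) (_ : Finite F)
      (φ : (Matrix (Fin n) (Fin n) R)ˣ →* F), φ M ≠ 1 := by
  have hex : ∃ i j, (M : Matrix (Fin n) (Fin n) R) i j ≠ (1 : Matrix (Fin n) (Fin n) R) i j := by
    by_contra h
    push_neg at h
    exact hM (by ext i j; exact h i j)
  obtain ⟨i, j, hij⟩ := hex
  set c := (M : Matrix (Fin n) (Fin n) R) i j - (1 : Matrix (Fin n) (Fin n) R) i j with hcdef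
  have hcne : c ≠ 0 := sub_ne_zero.mpr hij
  have hjac : Ideal.jacobson (⊥ : Ideal R) = ⊥ := by
    rw [← Ideal.radical_eq_jacobson]
    exact nilradical_eq_zero R
  have hcnotjac : c ∉ Ideal.jacobson (⊥ : Ideal R) := by
    rw [hjac]; simpa using hcne
  rw [Ideal.jacobson, Ideal.mem_sInf] at hcnotjac
  push_neg at hcnotjac
  obtain ⟨m, ⟨-, hmax⟩, hcm⟩ := hcnotjac
  haveI := hmax
  letI : Field (R ⧸ m) := Ideal.Quotient.field m
  haveI : Algebra.FiniteType ℤ (R ⧸ m) :=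
    Algebra.FiniteType.of_surjective (Ideal.Quotient.mkₐ ℤ m)
      (Ideal.Quotient.mkₐ_surjective ℤ m)
  haveI : Module.Finite ℤ (R ⧸ m) := finite_of_finite_type_of_isJacobsonRing ℤ (R ⧸ m)
  haveI hFfin : Finite (R ⧸ m) := field_finite_of_moduleFinite (R ⧸ m)
  refine ⟨(Matrix (Fin n) (Fin n) (R ⧸ m))ˣ, inferInstance, inferInstance,
    Units.map ((Ideal.Quotient.mk m).mapMatrix).toMonoidHom, ?_⟩
  intro heq
  apply hcm
  have hval : (Ideal.Quotient.mk m).mapMatrix (M : Matrix (Fin n) (Fin n) R) = 1 := by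
    have := congrArg Units.val heq
    simpa using this
  have h1 : (Ideal.Quotient.mk m).mapMatrix (M : Matrix (Fin n) (Fin n) R) i j =
      (Ideal.Quotient.mk m).mapMatrix (1 : Matrix (Fin n) (Fin n) R) i j := by
    rw [hval, _root_.map_one]
  have hent : Ideal.Quotient.mk m ((M : Matrix (Fin n) (Fin n) R) i j) =
      Ideal.Quotient.mk m ((1 : Matrix (Fin n) (Fin n) R) i j) := by
    simpa [RingHom.mapMatrix_apply, Matrix.map_apply] using h1
  rw [← Ideal.Quotient.eq_zero_iff_mem, hcdef, _root_.map_sub, hent, sub_self]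

set_option maxHeartbeats 800000 in
set_option synthInstance.maxHeartbeats 400000 in
/-- Every finitely generated subgroup of GL(n, ℂ) is residually finite. -/
theorem fg_subgroup_GL_residually_finite (n : ℕ)
    (H : Subgroup (GL (Fin n) ℂ)) (hfg : Group.FG H) :
    ∀ g : H, g ≠ 1 →
      ∃ (F : Type) (_ : Group F) (_ : Finite F) (φ : H →* F), φ g ≠ 1 := by
  classical
  obtain ⟨S, hS⟩ := hfg
  -- the finite set of entries of generators and their inverses
  set T : Finset ℂ := S.biUnion (fun s =>
      (Finset.univ.image fun p : Fin n × Fin n =>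
        ((s : GL (Fin n) ℂ) : Matrix (Fin n) (Fin n) ℂ) p.1 p.2)
    ∪ (Finset.univ.image fun p : Fin n × Fin n =>
        ((((s : GL (Fin n) ℂ))⁻¹ : GL (Fin n) ℂ) : Matrix (Fin n) (Fin n) ℂ) p.1 p.2)) with hTdef
  set R : Subalgebra ℤ ℂ := Algebra.adjoin ℤ (T : Set ℂ) with hRdef
  haveI hft : Algebra.FiniteType ℤ R := (Subalgebra.fg_iff_finiteType R).mp ⟨T, rfl⟩
  haveI : IsJacobsonRing ℤ := int_isJacobsonRing
  haveI hRjac : IsJacobsonRing R := isJacobsonRing_of_finiteType (A := ℤ)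
  -- the subgroup of GL with entries (and inverse entries) in R
  set G' : Subgroup (GL (Fin n) ℂ) :=
    { carrier := {g | (∀ i j, (g : Matrix (Fin n) (Fin n) ℂ) i j ∈ R) ∧
        (∀ i j, ((g⁻¹ : GL (Fin n) ℂ) : Matrix (Fin n) (Fin n) ℂ) i j ∈ R)}
      one_mem' := by
        constructor <;>
        · intro i j
          simp only [inv_one, Units.val_one, Matrix.one_apply]
          split <;> [exact R.one_mem; exact R.zero_mem]
      mul_mem' := by
        rintro a b ⟨ha1, ha2⟩ ⟨hb1, hb2⟩
        constructor
        · intro i j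
          rw [Units.val_mul, Matrix.mul_apply]
          exact Subalgebra.sum_mem R fun k _ => R.mul_mem (ha1 i k) (hb1 k j)
        · intro i j
          rw [_root_.mul_inv_rev, Units.val_mul, Matrix.mul_apply]
          exact Subalgebra.sum_mem R fun k _ => R.mul_mem (hb2 i k) (ha2 k j)
      inv_mem' := by
        rintro a ⟨ha1, ha2⟩
        refine ⟨ha2, ?_⟩
        rw [inv_inv]
        exact ha1 } with hG'def
  have hHG' : ∀ h : H, (h : GL (Fin n) ℂ) ∈ G' := by
    have hmap : Subgroup.closure (H.subtype '' (S : Set H)) = H := by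
      rw [← MonoidHom.map_closure, hS]
      exact (MonoidHom.range_eq_map H.subtype).symm.trans H.range_subtype
    have hle : H ≤ G' := by
      rw [← hmap, Subgroup.closure_le]
      rintro x ⟨s, hsS, rfl⟩
      constructor
      · intro i j
        apply Algebra.subset_adjoin
        simp only [hTdef, Finset.coe_biUnion, Set.mem_iUnion, Finset.mem_coe]
        exact ⟨s, hsS, Finset.mem_union_left _
          (Finset.mem_image.mpr ⟨(i, j), Finset.mem_univ _, rfl⟩)⟩
      · intro i j
        apply Algebra.subset_adjoin
        simp only [hTdef, Finset.coe_biUnion, Set.mem_iUnion, Finset.mem_coe]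
        exact ⟨s, hsS, Finset.mem_union_right _
          (Finset.mem_image.mpr ⟨(i, j), Finset.mem_univ _, rfl⟩)⟩
    exact fun h => hle h.2
  -- the injective ring hom from matrices over R to matrices over ℂ
  set ρ : Matrix (Fin n) (Fin n) R →+* Matrix (Fin n) (Fin n) ℂ :=
    (R.val : R →+* ℂ).mapMatrix with hρdef
  have hρinj : Function.Injective ρ := fun M N hMN => by
    ext i j
    have : (M i j : ℂ) = (N i j : ℂ) := congrFun (congrFun hMN i) j
    exact_mod_cast this
  -- the lift of elements of H to matrices over R
  set A : H → Matrix (Fin n) (Fin n) R :=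
    fun h i j => ⟨((h : GL (Fin n) ℂ) : Matrix (Fin n) (Fin n) ℂ) i j, (hHG' h).1 i j⟩ with hAdef
  set B : H → Matrix (Fin n) (Fin n) R :=
    fun h i j => ⟨((((h : GL (Fin n) ℂ))⁻¹ : GL (Fin n) ℂ) : Matrix (Fin n) (Fin n) ℂ) i j, (hHG' h).2 i j⟩
      with hBdef
  have hρA : ∀ h : H, ρ (A h) = ((h : GL (Fin n) ℂ) : Matrix (Fin n) (Fin n) ℂ) := by
    intro h; ext i j; rfl
  have hρB : ∀ h : H, ρ (B h) = ((((h : GL (Fin n) ℂ))⁻¹ : GL (Fin n) ℂ) : Matrix (Fin n) (Fin n) ℂ) := by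
    intro h; ext i j; rfl
  have hAB : ∀ h : H, A h * B h = 1 := by
    intro h
    apply hρinj
    rw [_root_.map_mul, _root_.map_one, hρA, hρB, ← Units.val_mul, mul_inv_cancel, Units.val_one]
  have hBA : ∀ h : H, B h * A h = 1 := by
    intro h
    apply hρinj
    rw [_root_.map_mul, _root_.map_one, hρA, hρB, ← Units.val_mul, inv_mul_cancel, Units.val_one]
  -- the monoid hom from H to units of matrices over R
  set ψ : H →* (Matrix (Fin n) (Fin n) R)ˣ :=
    { toFun := fun h => ⟨A h, B h, hAB h, hBA h⟩
      map_one' := by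
        apply Units.ext
        apply hρinj
        show ρ (A 1) = ρ 1
        rw [_root_.map_one, hρA]
        simp
      map_mul' := by
        intro a b
        apply Units.ext
        apply hρinj
        show ρ (A (a * b)) = ρ (A a * A b)
        rw [_root_.map_mul, hρA, hρA, hρA]
        norm_cast } with hψdef
  intro g hg
  -- find an entry where g differs from 1
  have hgval : ((g : GL (Fin n) ℂ) : Matrix (Fin n) (Fin n) ℂ) ≠ 1 := by
    intro heq
    apply hg
    apply Subtype.ext
    exact Units.ext heq
  have hexent : ∃ i j, ((g : GL (Fin n) ℂ) : Matrix (Fin n) (Fin n) ℂ) i j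
      ≠ (1 : Matrix (Fin n) (Fin n) ℂ) i j := by
    by_contra hc
    push_neg at hc
    exact hgval (by ext i j; exact hc i j)
  obtain ⟨i, j, hij⟩ := hexent
  have hAne : (ψ g : Matrix (Fin n) (Fin n) R) ≠ 1 := by
    intro h0
    apply hij
    have h1 : A g i j = (1 : Matrix (Fin n) (Fin n) R) i j := by
      show (ψ g : Matrix (Fin n) (Fin n) R) i j = (1 : Matrix (Fin n) (Fin n) R) i j
      rw [h0]
    have h2 : ((A g i j : R) : ℂ) = (((1 : Matrix (Fin n) (Fin n) R) i j : R) : ℂ) :=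
      congrArg Subtype.val h1
    rw [show ((g : GL (Fin n) ℂ) : Matrix (Fin n) (Fin n) ℂ) i j = ((A g i j : R) : ℂ) from rfl,
      h2]
    simp [Matrix.one_apply, apply_ite (Subtype.val : R → ℂ)]
  haveI : IsDomain R := inferInstance
  obtain ⟨F, hgrp, hfin, φ, hφ⟩ := matrix_units_aux (ψ g) hAne
  exact ⟨F, hgrp, hfin, φ.comp ψ, hφ⟩
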